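/- Let α ∈ (0,1) and let F and G be cumulative distribution functions with m(F) and m(G) finite and d(F,G) finite. Then |VaR_α(F) − VaR_α(G)| ≤ (2·m(F) + d(F,G)) / min{α, 1−α}. In particular, |VaR_α(G)| ≤ m(G) / min{α, 1−α} for any CDF G with m(G) finite. -/

import Mathlib

open MeasureTheory

/-- A cumulative distribution function: nondecreasing, right-continuous,
tending to `0` at `−∞` and to `1` at `+∞`. -/
def IsCDF (F : ℝ → ℝ) : Prop :=
  Monotone F ∧ (∀ y : ℝ, ContinuousWithinAt F (Set.Ici y) y) ∧
    Filter.Tendsto F Filter.atBot (nhds 0) ∧ Filter.Tendsto F Filter.atTop (nhds 1)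

/-- Value-at-risk at level `α`: `VaR_α(F) = inf{ y : F y ≥ α }`. -/
noncomputable def VaR (α : ℝ) (F : ℝ → ℝ) : ℝ :=
  sInf {y : ℝ | α ≤ F y}

/-- `m(F) = max{1, ∫_{−∞}^0 F, ∫_0^∞ (1 − F)}`, a tail-size functional. -/
noncomputable def mTail (F : ℝ → ℝ) : ℝ :=
  max 1 (max (∫ y in Set.Iic (0 : ℝ), F y) (∫ y in Set.Ioi (0 : ℝ), (1 - F y)))

/-- `d(F,G) = max{ sup_y |F−G|, |∫_{−∞}^0 (F−G)|, |∫_0^∞ (F−G)| }`, the norm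
distance between two CDFs. -/
noncomputable def dDist (F G : ℝ → ℝ) : ℝ :=
  max (⨆ y : ℝ, |F y - G y|)
    (max |∫ y in Set.Iic (0 : ℝ), (F y - G y)| |∫ y in Set.Ioi (0 : ℝ), (F y - G y)|)

/-- First VaR bound: `|VaR_α(F) − VaR_α(G)| ≤ (2 m(F) + d(F,G)) / min{α, 1−α}`,
and in particular `|VaR_α(G)| ≤ m(G) / min{α, 1−α}`. -/
lemma key_neg (G : ℝ → ℝ) (hmono : Monotone G)
    (hIntG : IntegrableOn G (Set.Iic (0 : ℝ))) (hG0 : ∀ y, 0 ≤ G y)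
    (t : ℝ) (ht : t ≤ 0) : (-t) * G t ≤ ∫ y in Set.Iic (0 : ℝ), G y := by
  have h1 : (-t) * G t = ∫ _y in Set.Ioc t 0, G t := by
    rw [setIntegral_const, Real.volume_real_Ioc_of_le (by linarith), smul_eq_mul]
    ring
  have h2 : (∫ _y in Set.Ioc t 0, G t) ≤ ∫ y in Set.Ioc t 0, G y := by
    refine setIntegral_mono_on (integrableOn_const ?_)
      (hIntG.mono_set Set.Ioc_subset_Iic_self) measurableSet_Ioc
      (fun x hx => hmono hx.1.le)
    rw [Real.volume_Ioc]; exact ENNReal.ofReal_ne_top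
  have h3 : (∫ y in Set.Ioc t 0, G y) ≤ ∫ y in Set.Iic (0 : ℝ), G y :=
    setIntegral_mono_set hIntG (Filter.Eventually.of_forall hG0)
      (Filter.Eventually.of_forall (fun x hx => hx.2))
  linarith

lemma key_pos (G : ℝ → ℝ) (hmono : Monotone G)
    (hIntG' : IntegrableOn (fun y => 1 - G y) (Set.Ioi (0 : ℝ))) (hG1 : ∀ y, G y ≤ 1)
    (t : ℝ) (ht : 0 ≤ t) : t * (1 - G t) ≤ ∫ y in Set.Ioi (0 : ℝ), (1 - G y) := by
  have h1 : t * (1 - G t) = ∫ _y in Set.Ioc 0 t, (1 - G t) := by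
    rw [setIntegral_const, Real.volume_real_Ioc_of_le (by linarith), smul_eq_mul]
    ring
  have h2 : (∫ _y in Set.Ioc 0 t, (1 - G t)) ≤ ∫ y in Set.Ioc 0 t, (1 - G y) := by
    refine setIntegral_mono_on (integrableOn_const ?_)
      (hIntG'.mono_set Set.Ioc_subset_Ioi_self) measurableSet_Ioc
      (fun x hx => by have := hmono hx.2; linarith)
    rw [Real.volume_Ioc]; exact ENNReal.ofReal_ne_top
  have h3 : (∫ y in Set.Ioc 0 t, (1 - G y)) ≤ ∫ y in Set.Ioi (0 : ℝ), (1 - G y) :=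
    setIntegral_mono_set hIntG' (Filter.Eventually.of_forall (fun y => by simp [hG1 y]))
      (Filter.Eventually.of_forall (fun x hx => hx.1))
  linarith

lemma abs_VaR_le (α : ℝ) (hα : α ∈ Set.Ioo (0 : ℝ) 1) (G : ℝ → ℝ) (hG : IsCDF G)
    (hIntG : IntegrableOn G (Set.Iic (0 : ℝ)))
    (hIntG' : IntegrableOn (fun y => 1 - G y) (Set.Ioi (0 : ℝ))) :
    |VaR α G| ≤ mTail G / min α (1 - α) := by
  obtain ⟨hmono, _, hbot, htop⟩ := hG
  obtain ⟨hα0, hα1⟩ := hα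
  have hG0 : ∀ y, 0 ≤ G y := hmono.le_of_tendsto hbot
  have hG1 : ∀ y, G y ≤ 1 := hmono.ge_of_tendsto htop
  set m := mTail G with hm
  have hm1 : (1 : ℝ) ≤ m := le_max_left _ _
  have hm0 : (0 : ℝ) < m := by linarith
  have hmin : (0 : ℝ) < min α (1 - α) := lt_min hα0 (by linarith)
  have hIic : (∫ y in Set.Iic (0 : ℝ), G y) ≤ m := le_max_of_le_right (le_max_left _ _)
  have hIoi : (∫ y in Set.Ioi (0 : ℝ), (1 - G y)) ≤ m := le_max_of_le_right (le_max_right _ _)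
  have hlb : ∀ y ∈ {y : ℝ | α ≤ G y}, -(m / α) ≤ y := by
    intro y hy
    by_contra hc
    push_neg at hc
    have hy0 : y < 0 :=
      hc.trans_le (neg_nonpos.mpr (div_nonneg hm0.le hα0.le))
    have h2 : (-y) * G y ≤ m := (key_neg G hmono hIntG hG0 y hy0.le).trans hIic
    have hy' : α ≤ G y := hy
    have h3 : m / α < -y := by linarith
    have h4 : m < -y * α := (div_lt_iff₀ hα0).mp h3
    nlinarith [mul_le_mul_of_nonneg_left hy' (neg_pos.mpr hy0).le]
  have hne : {y : ℝ | α ≤ G y}.Nonempty := by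
    obtain ⟨y, hy⟩ := (htop.eventually (eventually_gt_nhds hα1)).exists
    exact ⟨y, hy.le⟩
  have hbdd : BddBelow {y : ℝ | α ≤ G y} := ⟨-(m / α), hlb⟩
  have hlow : -(m / α) ≤ VaR α G := le_csInf hne hlb
  have hup : VaR α G ≤ m / (1 - α) := by
    apply csInf_le hbdd
    show α ≤ G (m / (1 - α))
    have ht0 : (0 : ℝ) < m / (1 - α) := div_pos hm0 (by linarith)
    have h2 : (m / (1 - α)) * (1 - G (m / (1 - α))) ≤ m :=
      (key_pos G hmono hIntG' hG1 _ ht0.le).trans hIoi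
    have h3 : (m / (1 - α)) * (1 - α) = m := div_mul_cancel₀ m (by linarith)
    nlinarith
  rw [abs_le]
  constructor
  · refine le_trans ?_ hlow
    rw [neg_le_neg_iff]
    gcongr
    exact min_le_left _ _
  · refine hup.trans ?_
    gcongr
    exact min_le_right _ _

lemma mTail_le_add (F G : ℝ → ℝ)
    (hIntF : IntegrableOn F (Set.Iic (0 : ℝ)))
    (hIntF' : IntegrableOn (fun y => 1 - F y) (Set.Ioi (0 : ℝ)))
    (hIntG : IntegrableOn G (Set.Iic (0 : ℝ)))
    (hIntG' : IntegrableOn (fun y => 1 - G y) (Set.Ioi (0 : ℝ))) :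
    mTail G ≤ mTail F + dDist F G := by
  have hd0 : 0 ≤ dDist F G :=
    le_trans (abs_nonneg _) (le_max_of_le_right (le_max_left _ _))
  have hd1 : |∫ y in Set.Iic (0 : ℝ), (F y - G y)| ≤ dDist F G :=
    le_max_of_le_right (le_max_left _ _)
  have hd2 : |∫ y in Set.Ioi (0 : ℝ), (F y - G y)| ≤ dDist F G :=
    le_max_of_le_right (le_max_right _ _)
  have hmF1 : (1 : ℝ) ≤ mTail F := le_max_left _ _
  have hmFa : (∫ y in Set.Iic (0 : ℝ), F y) ≤ mTail F := le_max_of_le_right (le_max_left _ _)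
  have hmFb : (∫ y in Set.Ioi (0 : ℝ), (1 - F y)) ≤ mTail F :=
    le_max_of_le_right (le_max_right _ _)
  have e1 : (∫ y in Set.Iic (0 : ℝ), (F y - G y)) =
      (∫ y in Set.Iic (0 : ℝ), F y) - ∫ y in Set.Iic (0 : ℝ), G y :=
    integral_sub hIntF hIntG
  have e2 : (∫ y in Set.Ioi (0 : ℝ), (F y - G y)) =
      (∫ y in Set.Ioi (0 : ℝ), (1 - G y)) - ∫ y in Set.Ioi (0 : ℝ), (1 - F y) := by
    rw [← integral_sub hIntG' hIntF']
    congr 1 with y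
    ring
  refine max_le (by linarith) (max_le ?_ ?_)
  · linarith [neg_abs_le (∫ y in Set.Iic (0 : ℝ), (F y - G y))]
  · have := le_abs_self (∫ y in Set.Ioi (0 : ℝ), (F y - G y))
    linarith

theorem VaR_first_bound (α : ℝ) (hα : α ∈ Set.Ioo (0 : ℝ) 1)
    (F G : ℝ → ℝ) (hF : IsCDF F) (hG : IsCDF G)
    (hIntF : IntegrableOn F (Set.Iic (0 : ℝ)))
    (hIntF' : IntegrableOn (fun y => 1 - F y) (Set.Ioi (0 : ℝ)))
    (hIntG : IntegrableOn G (Set.Iic (0 : ℝ)))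
    (hIntG' : IntegrableOn (fun y => 1 - G y) (Set.Ioi (0 : ℝ))) :
    |VaR α F - VaR α G| ≤ (2 * mTail F + dDist F G) / min α (1 - α) ∧
      |VaR α G| ≤ mTail G / min α (1 - α) := by
  have hmin : (0 : ℝ) < min α (1 - α) := lt_min hα.1 (by linarith [hα.2])
  have hFv := abs_VaR_le α hα F hF hIntF hIntF'
  have hGv := abs_VaR_le α hα G hG hIntG hIntG'
  have hmle := mTail_le_add F G hIntF hIntF' hIntG hIntG'
  refine ⟨?_, hGv⟩
  calc |VaR α F - VaR α G| ≤ |VaR α F| + |VaR α G| := abs_sub _ _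
    _ ≤ mTail F / min α (1 - α) + mTail G / min α (1 - α) := add_le_add hFv hGv
    _ ≤ mTail F / min α (1 - α) + (mTail F + dDist F G) / min α (1 - α) := by gcongr
    _ = (2 * mTail F + dDist F G) / min α (1 - α) := by
        rw [← add_div]; ring_nf
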